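/- arXiv:1005.5542 — 4 statements merged into one kernel-verified Lean document; each statement's English description precedes it below -/
import Mathlib

section
/- The constant zero function c₀ is a limit point of the set A = {f_{n,k} : n > 1, k ∈ ω} in C_k(M,2), where f_{n,k} is the characteristic function of M \ U(n,k), since for each n, f_{n,k} converges to f_n as k → ∞ (in the compact-open topology), and f_n converges to c₀ as n → ∞. -/
open Filter Topology

/-- The countable metric fan `M = (ω × ω) ∪ {∞}`; `none` plays the role of `∞`. -/
def Fan : Type := Option (ℕ × ℕ)

/-- The basic neighborhood `U(n) = {∞} ∪ ((ω \ n) × ω)` of `∞`. -/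
def fanU (n : ℕ) : Set Fan := {x | x = none ∨ ∃ p : ℕ × ℕ, x = some p ∧ n ≤ p.1}

/-- The fan topology: points of `ω × ω` are isolated and the sets `U(n)` are
basic neighborhoods of `∞`. -/
instance : TopologicalSpace Fan :=
  TopologicalSpace.generateFrom
    ({V | ∃ p : ℕ × ℕ, V = {some p}} ∪ {V | ∃ n : ℕ, V = fanU n})

/-- The set `U(n,k) = ({0} × n) ∪ ((n \ {0}) × k) ∪ U(n)`. -/
def fanUnk (n k : ℕ) : Set Fan :=
  {x | ∃ j : ℕ, j < n ∧ x = some (0, j)} ∪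
  {x | ∃ i j : ℕ, 0 < i ∧ i < n ∧ j < k ∧ x = some (i, j)} ∪
  fanU n

lemma isOpen_fanU (n : ℕ) : IsOpen (fanU n) :=
  TopologicalSpace.isOpen_generateFrom_of_mem (Or.inr ⟨n, rfl⟩)

lemma isOpen_fanSingle (p : ℕ × ℕ) : IsOpen ({some p} : Set Fan) :=
  TopologicalSpace.isOpen_generateFrom_of_mem (Or.inl ⟨p, rfl⟩)

lemma column_finite {K : Set Fan} (hK : IsCompact K) (i : ℕ) :
    {j : ℕ | some (i, j) ∈ K}.Finite := by
  let C : Fan → Set Fan := fun x => Option.elim x (fanU (i + 1)) (fun p => {some p})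
  have hCopen : ∀ x, IsOpen (C x) := by
    rintro (_ | p)
    · exact isOpen_fanU _
    · exact isOpen_fanSingle p
  have hcov : K ⊆ ⋃ x, C x := by
    rintro (_ | p) _
    · exact Set.mem_iUnion.2 ⟨none, Or.inl rfl⟩
    · exact Set.mem_iUnion.2 ⟨some p, rfl⟩
  obtain ⟨t, ht⟩ := hK.elim_finite_subcover C hCopen hcov
  have hsub : {j : ℕ | some (i, j) ∈ K} ⊆ (fun j : ℕ => (some (i, j) : Fan)) ⁻¹' (t : Set Fan) := by
    intro j hj
    have h1 := ht hj
    replace h1 := Set.mem_iUnion₂.1 h1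
    obtain ⟨x, hx, hmem⟩ := h1
    rcases x with _ | p
    · rcases hmem with h | ⟨p, hp, hle⟩
      · cases h
      · obtain rfl : p = (i, j) := (Option.some.inj hp).symm
        omega
    · have h2 : (some (i, j) : Fan) = some p := hmem
      exact Set.mem_preimage.2 (by rw [h2]; exact hx)
  have hfin : ((fun j : ℕ => (some (i, j) : Fan)) ⁻¹' (t : Set Fan)).Finite := by
    apply Set.Finite.preimage _ t.finite_toSet
    intro a _ b _ hab
    exact (Prod.mk.inj (Option.some.inj hab)).2
  exact hfin.subset hsub

lemma eventually_bound {K : Set Fan} (hK : IsCompact K) (n : ℕ) :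
    ∀ᶠ k in atTop, ∀ i, i < n → ∀ j, some (i, j) ∈ K → j < k := by
  have h : ∀ i : ℕ, ∀ᶠ k : ℕ in atTop, ∀ j, some (i, j) ∈ K → j < k := by
    intro i
    obtain ⟨b, hb⟩ := (column_finite hK i).bddAbove
    refine eventually_atTop.2 ⟨b + 1, fun k hk j hj => ?_⟩
    have := hb hj
    omega
  have := (eventually_all_finite (Set.finite_Iio n) (l := atTop)
    (p := fun i k => ∀ j, some (i, j) ∈ K → j < k)).2 (fun i _ => h i)
  filter_upwards [this] with k hk i hi j hj
  exact hk i hi j hj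

lemma mem_fanUnk_some (n k i j : ℕ) :
    some (i, j) ∈ fanUnk n k ↔ (i = 0 ∧ j < n) ∨ (0 < i ∧ i < n ∧ j < k) ∨ n ≤ i := by
  constructor
  · rintro ((⟨j', hj', heq⟩ | ⟨i', j', h1, h2, h3, heq⟩) | (h | ⟨p, hp, hle⟩))
    · obtain ⟨h1, h2⟩ := Prod.mk.inj (Option.some.inj heq)
      exact Or.inl ⟨h1, h2 ▸ hj'⟩
    · obtain ⟨ha, hb⟩ := Prod.mk.inj (Option.some.inj heq)
      exact Or.inr (Or.inl ⟨ha ▸ h1, ha ▸ h2, hb ▸ h3⟩)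
    · exact absurd h (by simp [Fan])
    · obtain rfl := Option.some.inj hp
      exact Or.inr (Or.inr hle)
  · rintro (⟨rfl, hj⟩ | ⟨h1, h2, h3⟩ | h)
    · exact Or.inl (Or.inl ⟨j, hj, rfl⟩)
    · exact Or.inl (Or.inr ⟨i, j, h1, h2, h3, rfl⟩)
    · exact Or.inr (Or.inr ⟨(i, j), rfl, h⟩)

lemma none_mem_fanUnk (n k : ℕ) : (none : Fan) ∈ fanUnk n k :=
  Or.inr (Or.inl rfl)

theorem stmt0 (fnk : ℕ → ℕ → C(Fan, Bool)) (fl : ℕ → C(Fan, Bool)) (c0 : C(Fan, Bool))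
    (hfnk : ∀ n k x, fnk n k x = true ↔ x ∉ fanUnk n k)
    (hfl : ∀ n x, fl n x = true ↔ ∃ j : ℕ, n ≤ j ∧ x = some (0, j))
    (hc0 : ∀ x, c0 x = false) :
    (∀ n, 1 < n → Tendsto (fun k => fnk n k) atTop (𝓝 (fl n))) ∧
    Tendsto fl atTop (𝓝 c0) ∧
    c0 ∈ closure {f : C(Fan, Bool) | ∃ n k : ℕ, 1 < n ∧ f = fnk n k} ∧
    c0 ∉ {f : C(Fan, Bool) | ∃ n k : ℕ, 1 < n ∧ f = fnk n k} := by
  have key1 : ∀ n : ℕ, 1 < n → Tendsto (fun k => fnk n k) atTop (𝓝 (fl n)) := by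
    intro n hn
    rw [ContinuousMap.tendsto_nhds_compactOpen]
    intro K hK U hU hf
    have heq : ∀ᶠ k in atTop, ∀ x ∈ K, fnk n k x = fl n x := by
      filter_upwards [eventually_bound hK n] with k hk x hx
      have hiff : fnk n k x = true ↔ fl n x = true := by
        rw [hfnk, hfl]
        rcases x with _ | ⟨i, j⟩
        · constructor
          · intro h; exact absurd (none_mem_fanUnk n k) h
          · rintro ⟨j, _, h⟩; cases h
        · refine (not_congr (mem_fanUnk_some n k i j)).trans ?_
          have hjk : 0 < i → i < n → j < k := fun h1 h2 => hk i h2 j hx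
          constructor
          · intro h
            push_neg at h
            obtain ⟨h1, h2, h3⟩ := h
            have hi0 : i = 0 := by
              by_contra hc
              have hi : 0 < i := Nat.pos_of_ne_zero hc
              have := h2 hi h3; omega
            subst hi0
            exact ⟨j, h1 rfl, rfl⟩
          · rintro ⟨j', hj', heq⟩
            obtain ⟨rfl, rfl⟩ := Prod.mk.inj (Option.some.inj heq)
            rintro (⟨_, h2⟩ | ⟨h1, _, _⟩ | h)
            · omega
            · omega
            · omega
      cases h1 : fnk n k x <;> cases h2 : fl n x <;> simp_all
    filter_upwards [heq] with k hk x hx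
    show fnk n k x ∈ U
    rw [hk x hx]
    exact hf hx
  have key2 : Tendsto fl atTop (𝓝 c0) := by
    rw [ContinuousMap.tendsto_nhds_compactOpen]
    intro K hK U hU hf
    have heq : ∀ᶠ n in atTop, ∀ x ∈ K, fl n x = c0 x := by
      obtain ⟨b, hb⟩ := (column_finite hK 0).bddAbove
      refine eventually_atTop.2 ⟨b + 1, fun n hn x hx => ?_⟩
      rw [hc0]
      rw [Bool.eq_false_iff]
      intro h
      rw [hfl] at h
      obtain ⟨j, hj, rfl⟩ := h
      have : j ≤ b := hb hx
      omega
    filter_upwards [heq] with n hn x hx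
    rw [hn x hx]
    exact hf hx
  refine ⟨key1, key2, ?_, ?_⟩
  · have h1 : ∀ n : ℕ, 1 < n → fl n ∈ closure {f : C(Fan, Bool) | ∃ n k : ℕ, 1 < n ∧ f = fnk n k} := by
      intro n hn
      exact mem_closure_of_tendsto (key1 n hn) (Eventually.of_forall fun k => ⟨n, k, hn, rfl⟩)
    have : c0 ∈ closure (closure {f : C(Fan, Bool) | ∃ n k : ℕ, 1 < n ∧ f = fnk n k}) :=
      mem_closure_of_tendsto key2 (eventually_atTop.2 ⟨2, fun n hn => h1 n hn⟩)
    rwa [closure_closure] at this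
  · rintro ⟨n, k, hn, hc⟩
    have h1 : fnk n k (some (0, n)) = true := by
      refine (hfnk n k _).2 ((mem_fanUnk_some n k 0 n).not.2 ?_)
      omega
    rw [← hc] at h1; have h1 : false = true := (hc0 _).symm.trans h1
    exact absurd h1 (by simp)
end

section
/- In C_k(M,2), for every sequence (k_n)_{n>1} of natural numbers, the constant zero function c₀ is not in the closure of the set {f_{n,k} : n > 1, k < k_n}. -/
open Filter Topology

theorem stmt1 (fnk : ℕ → ℕ → C(Fan, Bool)) (c0 : C(Fan, Bool))
    (hfnk : ∀ n k x, fnk n k x = true ↔ x ∉ fanUnk n k)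
    (hc0 : ∀ x, c0 x = false)
    (kseq : ℕ → ℕ) :
    c0 ∉ closure {f : C(Fan, Bool) | ∃ n k : ℕ, 1 < n ∧ k < kseq n ∧ f = fnk n k} := by
  classical
  -- the sequence converging to `none`
  set u : ℕ → Fan := fun m => some (m + 1, kseq (m + 2)) with hu
  have htend : Tendsto u atTop (𝓝 (none : Fan)) := by
    have hnhds := @TopologicalSpace.nhds_generateFrom Fan
      ({V | ∃ p : ℕ × ℕ, V = {some p}} ∪ {V | ∃ n : ℕ, V = fanU n}) none
    rw [hnhds, tendsto_iInf]
    intro s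
    rw [tendsto_iInf]
    rintro ⟨hnone, hs⟩
    rw [tendsto_principal]
    rcases hs with ⟨p, rfl⟩ | ⟨m, rfl⟩
    · exact absurd (show (none : Option (ℕ × ℕ)) = some p from hnone) (by simp)
    · filter_upwards [eventually_ge_atTop m] with n hn
      exact Or.inr ⟨(n + 1, kseq (n + 2)), rfl, by simpa using by omega⟩
  have hK : IsCompact (insert (none : Fan) (Set.range u)) :=
    htend.isCompact_insert_range
  have hVopen : IsOpen {f : C(Fan, Bool) | Set.MapsTo f (insert (none : Fan) (Set.range u)) {false}} :=
    ContinuousMap.isOpen_setOf_mapsTo hK (isOpen_discrete _)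
  intro hcl
  rw [mem_closure_iff] at hcl
  obtain ⟨f, hfV, n, k, hn, hk, rfl⟩ :=
    hcl _ hVopen (by intro x _; simp [hc0])
  have hx : some (n - 1, kseq n) ∈ insert (none : Fan) (Set.range u) := by
    right
    refine ⟨n - 2, ?_⟩
    have h1 : n - 2 + 1 = n - 1 := by omega
    have h2 : n - 2 + 2 = n := by omega
    simp only [hu, h1, h2]
    rfl
  have hnot : (some (n - 1, kseq n) : Fan) ∉ fanUnk n k := by
    rintro ((⟨j, hj, hx⟩ | ⟨i, j, hi, hin, hjk, hx⟩) | (hx | ⟨p, hx, hp⟩))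
    · replace hx : (n-1, kseq n) = (0, j) := Option.some_inj.mp hx
      have := congrArg Prod.fst hx
      simp at this; omega
    · replace hx : (n-1, kseq n) = (i, j) := Option.some_inj.mp hx
      obtain ⟨h1, h2⟩ := Prod.mk.injEq .. ▸ hx
      simp at hx
      omega
    · exact absurd hx (by simp [Fan])
    · replace hx : (n-1, kseq n) = p := Option.some_inj.mp hx
      subst hx
      simp at hp
      omega
  have htrue : fnk n k (some (n - 1, kseq n)) = true := (hfnk n k _).mpr hnot
  have hfalse := hfV hx
  simp only [Set.mem_singleton_iff] at hfalse
  rw [htrue] at hfalse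
  simp at hfalse
end

section
/- If every point of a topological space Z is a regular G_δ point (i.e., {z} = ⋂_n cl(U_n) for some open neighborhoods U_n of z), and Z contains a topological copy of the Arens space S₂, then Z contains a closed topological copy of S₂. -/
/-- The convergent sequence `C₀ = {(0,0)} ∪ {(1/n, 0) : n ≥ 1}`. -/
def arensC0 : Set (ℝ × ℝ) :=
  {(0, 0)} ∪ {p | ∃ n : ℕ, 0 < n ∧ p = (1 / (n : ℝ), 0)}

/-- The convergent sequence `Cₙ = {(1/n, 0)} ∪ {(1/n, 1/(nm)) : m ≥ 1}`. -/
def arensC (n : ℕ) : Set (ℝ × ℝ) :=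
  {(1 / (n : ℝ), 0)} ∪ {p | ∃ m : ℕ, 0 < m ∧ p = (1 / (n : ℝ), 1 / ((n : ℝ) * (m : ℝ)))}

/-- The underlying set of the Arens space `S₂`. -/
def arensCarrier : Set (ℝ × ℝ) :=
  arensC0 ∪ ⋃ n ∈ {n : ℕ | 0 < n}, arensC n

/-- The Arens space `S₂` as a type. -/
def ArensS2 : Type := ↥arensCarrier

/-- The convergent sequences indexing the inductive topology of `S₂`. -/
def arensSeq : Option {n : ℕ // 0 < n} → Set (ℝ × ℝ)
  | none => arensC0
  | some n => arensC n.val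

/-- The Arens topology: the strongest (final/inductive) topology inducing the planar
topology on each of the convergent sequences `C₀, C₁, C₂, …`. -/
instance : TopologicalSpace ArensS2 :=
  ⨆ i : Option {n : ℕ // 0 < n},
    TopologicalSpace.coinduced
      (fun x : {x : ArensS2 // Subtype.val x ∈ arensSeq i} => x.val)
      (TopologicalSpace.induced
        (fun x : {x : ArensS2 // Subtype.val x ∈ arensSeq i} => Subtype.val (Subtype.val x))
        inferInstance)

namespace Arens

lemma mem_carrier (k m : ℕ) : ((1 / (k : ℝ), 1 / ((k : ℝ) * (m : ℝ))) : ℝ × ℝ) ∈ arensCarrier := by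
  rcases Nat.eq_zero_or_pos k with hk | hk
  · subst hk
    left; left; simp
  rcases Nat.eq_zero_or_pos m with hm | hm
  · subst hm
    left; right; exact ⟨k, hk, by simp⟩
  · right
    refine Set.mem_biUnion hk ?_
    right; exact ⟨m, hm, rfl⟩

noncomputable def bb (k m : ℕ) : ArensS2 := ⟨_, mem_carrier k m⟩

noncomputable def aa (k : ℕ) : ArensS2 := bb k 0

noncomputable def z0 : ArensS2 := bb 0 0

lemma bb_val (k m : ℕ) : (bb k m : ArensS2).1 = (1 / (k : ℝ), 1 / ((k : ℝ) * (m : ℝ))) := rfl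

lemma aa_val (k : ℕ) : (aa k : ArensS2).1 = (1 / (k : ℝ), 0) := by
  simp [aa, bb_val]

lemma z0_val : (z0 : ArensS2).1 = (0, 0) := by simp [z0, bb_val]

lemma val_injective : Function.Injective (fun x : ArensS2 => (x : arensCarrier).1) :=
  fun a b h => Subtype.ext h

lemma cast_one_div_inj {k k' : ℕ} (h : (1 : ℝ) / k = 1 / k') : k = k' := by
  have := inv_injective (by rw [← one_div, ← one_div, h] : ((k : ℝ))⁻¹ = ((k' : ℝ))⁻¹)
  exact_mod_cast this

lemma ext_val {x y : ArensS2} (h : (x : arensCarrier).1 = (y : arensCarrier).1) : x = y :=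
  Subtype.ext h

lemma bb_zero_left (m : ℕ) : bb 0 m = z0 := by
  apply ext_val; simp [bb_val, z0_val]

lemma aa_zero : aa 0 = z0 := by
  apply ext_val; simp [aa_val, z0_val]

lemma aa_inj {k k' : ℕ} (h : aa k = aa k') : k = k' := by
  have := congrArg (fun x : ArensS2 => (x : arensCarrier).1.1) h
  simp only [aa_val] at this
  exact cast_one_div_inj this

lemma aa_ne_z0 {k : ℕ} (hk : 0 < k) : aa k ≠ z0 := by
  intro h
  rw [← aa_zero] at h
  exact hk.ne' (aa_inj h)

lemma bb_ne_z0 {k m : ℕ} (hk : 0 < k) : bb k m ≠ z0 := by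
  intro h
  have := congrArg (fun x : ArensS2 => (x : arensCarrier).1.1) h
  simp only [bb_val, z0_val] at this
  have : (k : ℝ) = 0 := by
    by_contra h0
    exact h0 (by exact_mod_cast cast_one_div_inj (k' := 0) (by simpa using this))
  exact hk.ne' (by exact_mod_cast this)

lemma bb_fst {k k' m m' : ℕ} (h : bb k m = bb k' m') : k = k' := by
  have := congrArg (fun x : ArensS2 => (x : arensCarrier).1.1) h
  simp only [bb_val] at this
  exact cast_one_div_inj this

lemma bb_snd {k m m' : ℕ} (hk : 0 < k) (h : bb k m = bb k m') : m = m' := by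
  have := congrArg (fun x : ArensS2 => (x : arensCarrier).1.2) h
  simp only [bb_val] at this
  have hkk : (k : ℝ) ≠ 0 := Nat.cast_ne_zero.mpr hk.ne'
  rcases Nat.eq_zero_or_pos m with hm | hm
  · subst hm
    simp only [Nat.cast_zero, mul_zero, div_zero] at this
    rcases Nat.eq_zero_or_pos m' with hm' | hm'
    · omega
    · exfalso
      have : (1 : ℝ) / (k * m') = 0 := this.symm
      rw [div_eq_zero_iff] at this
      rcases this with h1 | h2
      · norm_num at h1
      · have hne : (k : ℝ) * m' ≠ 0 := by positivity
        exact hne h2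
  · rcases Nat.eq_zero_or_pos m' with hm' | hm'
    · subst hm'
      simp only [Nat.cast_zero, mul_zero, div_zero] at this
      rw [div_eq_zero_iff] at this
      rcases this with h1 | h2
      · norm_num at h1
      · exfalso
        have hne : (k : ℝ) * m ≠ 0 := by positivity
        exact hne h2
    · have := cast_one_div_inj (k := k * m) (k' := k * m') (by push_cast; exact this)
      exact Nat.eq_of_mul_eq_mul_left hk this

lemma bb_ne_aa {k k' m : ℕ} (hk : 0 < k) (hm : 0 < m) : bb k m ≠ aa k' := by
  intro h
  have := congrArg (fun x : ArensS2 => (x : arensCarrier).1.2) h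
  simp only [bb_val, aa_val] at this
  rw [div_eq_zero_iff] at this
  rcases this with h1 | h2
  · norm_num at h1
  · have hne : (k : ℝ) * m ≠ 0 := by positivity
    exact hne h2

lemma exists_rep (x : ArensS2) : x = z0 ∨ (∃ k, 0 < k ∧ x = aa k) ∨ ∃ k m, 0 < k ∧ 0 < m ∧ x = bb k m := by
  obtain ⟨p, hp⟩ := x
  rcases hp with (h0 | ⟨n, hn, hp⟩) | hC
  · left; exact ext_val (by rw [z0_val]; exact h0)
  · right; left; exact ⟨n, hn, ext_val (by rw [aa_val]; exact hp)⟩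
  · simp only [Set.mem_setOf_eq, Set.mem_iUnion] at hC
    obtain ⟨n, hn, hC⟩ := hC
    rcases hC with h0 | ⟨m, hm, hp⟩
    · right; left; exact ⟨n, hn, ext_val (by rw [aa_val]; exact h0)⟩
    · right; right; exact ⟨n, m, hn, hm, ext_val (by rw [bb_val]; exact hp)⟩


open Filter TopologicalSpace Metric Topology

lemma one_div_sub (a : ℝ) (ha : 0 < a) : 1 / a - 1 / (a + 1) = 1 / (a * (a + 1)) := by
  have h1 : a ≠ 0 := ne_of_gt ha
  have h2 : a + 1 ≠ 0 := by positivity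
  field_simp
  ring

lemma gap (m m' : ℕ) (hm : 0 < m) (h : m' ≠ m) :
    1 / ((m : ℝ) * ((m : ℝ) + 1)) ≤ |1 / (m' : ℝ) - 1 / (m : ℝ)| := by
  have hm0 : (0 : ℝ) < m := by exact_mod_cast hm
  rcases Nat.eq_zero_or_pos m' with h0 | hm'
  · subst h0
    rw [Nat.cast_zero, div_zero, zero_sub, abs_neg, abs_of_nonneg (by positivity)]
    apply one_div_le_one_div_of_le hm0
    nlinarith
  · have hm'0 : (0 : ℝ) < m' := by exact_mod_cast hm'
    rcases lt_or_gt_of_ne h with hlt | hgt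
    · -- m' < m
      have hcast : (m' : ℝ) + 1 ≤ m := by exact_mod_cast hlt
      have h1 : 1 / (m : ℝ) ≤ 1 / ((m' : ℝ) + 1) := one_div_le_one_div_of_le (by positivity) hcast
      have h2 : 1 / ((m' : ℝ) * ((m' : ℝ) + 1)) ≤ 1 / (m' : ℝ) - 1 / (m : ℝ) := by
        rw [← one_div_sub (m' : ℝ) hm'0]; linarith
      have h3 : 1 / ((m : ℝ) * ((m : ℝ) + 1)) ≤ 1 / ((m' : ℝ) * ((m' : ℝ) + 1)) := by
        apply one_div_le_one_div_of_le (by positivity)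
        have : (m' : ℝ) ≤ m := by linarith
        nlinarith
      rw [abs_of_nonneg (by linarith [h2, one_div_pos.mpr (show (0:ℝ) < (m':ℝ) * ((m':ℝ)+1) by positivity)] : (0:ℝ) ≤ 1 / (m' : ℝ) - 1 / (m : ℝ))]
      linarith
    · -- m < m'
      have hcast : (m : ℝ) + 1 ≤ m' := by exact_mod_cast hgt
      have h1 : 1 / (m' : ℝ) ≤ 1 / ((m : ℝ) + 1) := one_div_le_one_div_of_le (by positivity) hcast
      have h2 : 1 / ((m : ℝ) * ((m : ℝ) + 1)) ≤ 1 / (m : ℝ) - 1 / (m' : ℝ) := by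
        rw [← one_div_sub (m : ℝ) hm0]; linarith
      have h4 : 1 / ((m : ℝ) + 1) ≤ 1 / (m : ℝ) := one_div_le_one_div_of_le hm0 (by linarith)
      rw [abs_sub_comm, abs_of_nonneg (by linarith : (0:ℝ) ≤ 1 / (m : ℝ) - 1 / (m' : ℝ))]
      linarith

lemma mem_C0_iff {p : ℝ × ℝ} : p ∈ arensC0 ↔ ∃ j : ℕ, p = (1 / (j : ℝ), 0) := by
  constructor
  · rintro (h | ⟨n, hn, hp⟩)
    · exact ⟨0, by simpa using h⟩
    · exact ⟨n, hp⟩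
  · rintro ⟨j, rfl⟩
    rcases Nat.eq_zero_or_pos j with h0 | hj
    · subst h0; left; simp
    · right; exact ⟨j, hj, rfl⟩

lemma mem_C_iff {n : ℕ} (hn : 0 < n) {p : ℝ × ℝ} :
    p ∈ arensC n ↔ ∃ m : ℕ, p = (1 / (n : ℝ), 1 / ((n : ℝ) * (m : ℝ))) := by
  constructor
  · rintro (h | ⟨m, hm, hp⟩)
    · exact ⟨0, by simpa using h⟩
    · exact ⟨m, hp⟩
  · rintro ⟨m, rfl⟩
    rcases Nat.eq_zero_or_pos m with h0 | hm
    · subst h0; left; simp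
    · right; exact ⟨m, hm, rfl⟩

/-- The subtype over the `i`-th convergent sequence. -/
abbrev sb (i : Option {n : ℕ // 0 < n}) : Type := {x : ArensS2 // Subtype.val x ∈ arensSeq i}

def pr (i : Option {n : ℕ // 0 < n}) : sb i → ArensS2 := fun x => x.val

def toPlane (i : Option {n : ℕ // 0 < n}) : sb i → ℝ × ℝ := fun x =>
  Subtype.val (Subtype.val x)

noncomputable def ti (i : Option {n : ℕ // 0 < n}) : TopologicalSpace (sb i) :=
  TopologicalSpace.induced (toPlane i) inferInstance

lemma dist_pt (j k m μ : ℕ) :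
    dist ((1 / (j : ℝ), 1 / ((j : ℝ) * (k : ℝ))) : ℝ × ℝ) (1 / (m : ℝ), 1 / ((m : ℝ) * (μ : ℝ)))
      = max |1 / (j : ℝ) - 1 / (m : ℝ)| |1 / ((j : ℝ) * (k : ℝ)) - 1 / ((m : ℝ) * (μ : ℝ))| := by
  rw [Prod.dist_eq]
  simp [Real.dist_eq]

lemma dist_mk (x1 y1 x2 y2 : ℝ) :
    dist ((x1, y1) : ℝ × ℝ) ((x2, y2) : ℝ × ℝ) = max |x1 - x2| |y1 - y2| := by
  rw [Prod.dist_eq]; simp [Real.dist_eq]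

lemma pr_def (i : Option {n : ℕ // 0 < n}) (y : sb i) : pr i y = y.1 := rfl

lemma toPlane_def (i : Option {n : ℕ // 0 < n}) (y : sb i) :
    toPlane i y = (y.1 : arensCarrier).1 := rfl

lemma aa_mem_seq_none (k : ℕ) : (aa k : arensCarrier).1 ∈ arensSeq none := by
  rw [aa_val]; exact mem_C0_iff.mpr ⟨k, rfl⟩

lemma bb_mem_seq_some (n : {n : ℕ // 0 < n}) (m : ℕ) :
    (bb n.1 m : arensCarrier).1 ∈ arensSeq (some n) := by
  rw [bb_val]; exact (mem_C_iff n.2).mpr ⟨m, rfl⟩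

theorem isOpen_iff {V : Set ArensS2} :
    IsOpen V ↔ ((z0 ∈ V → ∀ᶠ k in atTop, aa k ∈ V) ∧
      ∀ k, 0 < k → aa k ∈ V → ∀ᶠ m in atTop, bb k m ∈ V) := by
  have h1 : IsOpen V ↔ ∀ i, IsOpen[TopologicalSpace.coinduced (pr i) (ti i)] V :=
    isOpen_iSup_iff
  have h2 : ∀ i, IsOpen[TopologicalSpace.coinduced (pr i) (ti i)] V ↔
      IsOpen[ti i] (pr i ⁻¹' V) := fun i => isOpen_coinduced
  rw [h1]
  simp only [h2]
  constructor
  · intro h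
    constructor
    · -- z0 ∈ V → eventually aa k ∈ V
      intro hz0
      have hop := h none
      have hx0mem : (z0 : arensCarrier).1 ∈ arensSeq none := by
        rw [← aa_zero]; exact aa_mem_seq_none 0
      set x0 : sb none := ⟨z0, hx0mem⟩ with hx0
      have hmem : pr none ⁻¹' V ∈ @nhds _ (ti none) x0 :=
        @IsOpen.mem_nhds _ (ti none) _ _ hop hz0
      have hmem' : pr none ⁻¹' V ∈ Filter.comap (toPlane none) (𝓝 (toPlane none x0)) := by
        rw [← nhds_induced]; exact hmem
      have hc : toPlane none x0 = ((0 : ℝ), (0 : ℝ)) := z0_val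
      rw [hc, Filter.mem_comap] at hmem'
      obtain ⟨t, ht, hsub⟩ := hmem'
      rw [Metric.mem_nhds_iff] at ht
      obtain ⟨ε, hε, hball⟩ := ht
      obtain ⟨N, hN⟩ := exists_nat_one_div_lt hε
      refine Filter.eventually_atTop.mpr ⟨N + 1, fun k hk => ?_⟩
      have hk1 : (0 : ℝ) < k := by
        have : 0 < k := by omega
        exact_mod_cast this
      set y : sb none := ⟨aa k, aa_mem_seq_none k⟩ with hy
      have hdy : toPlane none y ∈ Metric.ball ((0 : ℝ), (0 : ℝ)) ε := by
        rw [toPlane_def, aa_val, Metric.mem_ball, dist_mk]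
        have hd1 : |1 / (k : ℝ) - 0| = 1 / (k : ℝ) := by
          rw [sub_zero, abs_of_nonneg (by positivity)]
        rw [hd1, sub_zero, abs_zero, max_eq_left (by positivity)]
        have h2' : 1 / (k : ℝ) ≤ 1 / ((N : ℝ) + 1) := by
          apply one_div_le_one_div_of_le (by positivity)
          have : (N : ℝ) + 1 ≤ k := by exact_mod_cast hk
          linarith
        linarith
      exact hsub (hball hdy)
    · -- aa k ∈ V → eventually bb k m ∈ V
      intro k hk hak
      have hop := h (some ⟨k, hk⟩)
      have hk0 : (0 : ℝ) < k := by exact_mod_cast hk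
      have hx0mem : (aa k : arensCarrier).1 ∈ arensSeq (some ⟨k, hk⟩) := by
        have := bb_mem_seq_some ⟨k, hk⟩ 0
        simpa [aa] using this
      set x0 : sb (some ⟨k, hk⟩) := ⟨aa k, hx0mem⟩ with hx0
      have hmem : pr _ ⁻¹' V ∈ @nhds _ (ti (some ⟨k, hk⟩)) x0 :=
        @IsOpen.mem_nhds _ (ti (some ⟨k, hk⟩)) _ _ hop hak
      have hmem' : pr _ ⁻¹' V ∈ Filter.comap (toPlane (some ⟨k, hk⟩)) (𝓝 (toPlane _ x0)) := by
        rw [← nhds_induced]; exact hmem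
      have hc : toPlane (some ⟨k, hk⟩) x0 = ((1 / (k : ℝ), (0 : ℝ))) := aa_val k
      rw [hc, Filter.mem_comap] at hmem'
      obtain ⟨t, ht, hsub⟩ := hmem'
      rw [Metric.mem_nhds_iff] at ht
      obtain ⟨ε, hε, hball⟩ := ht
      obtain ⟨N, hN⟩ := exists_nat_one_div_lt hε
      refine Filter.eventually_atTop.mpr ⟨N + 1, fun m hm => ?_⟩
      have hm1 : 0 < m := by omega
      have hm0 : (0 : ℝ) < m := by exact_mod_cast hm1
      set y : sb (some ⟨k, hk⟩) := ⟨bb k m, bb_mem_seq_some ⟨k, hk⟩ m⟩ with hy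
      have hdy : toPlane _ y ∈ Metric.ball ((1 / (k : ℝ), (0 : ℝ))) ε := by
        rw [toPlane_def, bb_val, Metric.mem_ball, dist_mk]
        rw [sub_self, abs_zero, sub_zero, abs_of_nonneg (by positivity),
          max_eq_right (by positivity)]
        have h2' : 1 / ((k : ℝ) * m) ≤ 1 / ((N : ℝ) + 1) := by
          apply one_div_le_one_div_of_le (by positivity)
          have h3' : (N : ℝ) + 1 ≤ m := by exact_mod_cast hm
          have hk1 : (1 : ℝ) ≤ k := by exact_mod_cast hk
          nlinarith [mul_nonneg (sub_nonneg.mpr hk1) hm0.le]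
        linarith
      exact hsub (hball hdy)
  · rintro ⟨hA, hB⟩ i
    letI : TopologicalSpace (sb i) := ti i
    refine isOpen_iff_mem_nhds.mpr fun y hy => ?_
    show pr i ⁻¹' V ∈ @nhds _
      (TopologicalSpace.induced (toPlane i) inferInstance) y
    rw [nhds_induced, Filter.mem_comap]
    match i with
    | none =>
      obtain ⟨j, hj⟩ := mem_C0_iff.mp y.2
      have hyv : pr none y = aa j := ext_val (hj.trans (aa_val j).symm)
      rcases Nat.eq_zero_or_pos j with hj0 | hj0
      · -- y is the origin
        subst hj0
        have hz0V : z0 ∈ V := by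
          have := hy
          rw [Set.mem_preimage, hyv, aa_zero] at this
          exact this
        obtain ⟨N, hN⟩ := Filter.eventually_atTop.mp (hA hz0V)
        refine ⟨Metric.ball ((0 : ℝ), (0 : ℝ)) (1 / ((N : ℝ) + 1)), ?_, ?_⟩
        · have hcen : toPlane none y = ((0 : ℝ), (0 : ℝ)) := by
            rw [toPlane_def, hj]; norm_num
          rw [hcen]
          exact Metric.ball_mem_nhds _ (by positivity)
        · intro y' hy'
          obtain ⟨l, hl⟩ := mem_C0_iff.mp y'.2
          have hyv' : pr none y' = aa l := ext_val (hl.trans (aa_val l).symm)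
          rcases Nat.eq_zero_or_pos l with hl0 | hl0
          · subst hl0
            show pr none y' ∈ V
            rw [hyv', aa_zero]; exact hz0V
          · have hl0' : (0 : ℝ) < l := by exact_mod_cast hl0
            rw [Set.mem_preimage, toPlane_def, hl, Metric.mem_ball, dist_mk] at hy'
            rw [sub_zero, sub_zero, abs_zero, abs_of_nonneg (by positivity),
              max_eq_left (by positivity)] at hy'
            have hlt : (N : ℝ) + 1 < l := lt_of_one_div_lt_one_div hl0' hy'
            have hlN : N ≤ l := by
              have : (N : ℝ) < l := by linarith
              exact_mod_cast this.le
            show pr none y' ∈ V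
            rw [hyv']
            exact hN l hlN
      · -- y is an isolated point (1/j, 0) of C₀
        have hj0' : (0 : ℝ) < j := by exact_mod_cast hj0
        refine ⟨Metric.ball ((1 / (j : ℝ), (0 : ℝ))) (1 / ((j : ℝ) * ((j : ℝ) + 1))), ?_, ?_⟩
        · have hcen : toPlane none y = ((1 / (j : ℝ), (0 : ℝ))) := by
            rw [toPlane_def, hj]
          rw [hcen]
          exact Metric.ball_mem_nhds _ (by positivity)
        · intro y' hy'
          obtain ⟨l, hl⟩ := mem_C0_iff.mp y'.2
          have hyv' : pr none y' = aa l := ext_val (hl.trans (aa_val l).symm)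
          rcases eq_or_ne l j with rfl | hlj
          · show pr none y' ∈ V
            rw [hyv', ← hyv]
            exact hy
          · exfalso
            rw [Set.mem_preimage, toPlane_def, hl, Metric.mem_ball, dist_mk] at hy'
            have hge := gap j l hj0 hlj
            have : |1 / (l : ℝ) - 1 / j| ≤ max |1 / (l : ℝ) - 1 / j| |(0 : ℝ) - 0| :=
              le_max_left _ _
            linarith [le_max_left |1 / (l : ℝ) - 1 / (j : ℝ)| |(0:ℝ) - 0|]
    | some n =>
      obtain ⟨μ, hμ⟩ := (mem_C_iff n.2).mp y.2
      have hn0 : (0 : ℝ) < n.1 := by exact_mod_cast n.2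
      have hyv : pr (some n) y = bb n.1 μ := ext_val (hμ.trans (bb_val n.1 μ).symm)
      rcases Nat.eq_zero_or_pos μ with hμ0 | hμ0
      · -- y is the limit point (1/n, 0) of Cₙ
        subst hμ0
        have haV : aa n.1 ∈ V := by
          have := hy
          rw [Set.mem_preimage, hyv] at this
          exact this
        obtain ⟨M, hM⟩ := Filter.eventually_atTop.mp (hB n.1 n.2 haV)
        refine ⟨Metric.ball ((1 / (n.1 : ℝ), (0 : ℝ)))
          (1 / ((n.1 : ℝ) * ((M : ℝ) + 1))), ?_, ?_⟩
        · have hcen : toPlane (some n) y = ((1 / (n.1 : ℝ), (0 : ℝ))) := by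
            rw [toPlane_def, hμ]; norm_num
          rw [hcen]
          exact Metric.ball_mem_nhds _ (by positivity)
        · intro y' hy'
          obtain ⟨m, hm⟩ := (mem_C_iff n.2).mp y'.2
          have hyv' : pr (some n) y' = bb n.1 m := ext_val (hm.trans (bb_val n.1 m).symm)
          rcases Nat.eq_zero_or_pos m with hm0 | hm0
          · subst hm0
            show pr (some n) y' ∈ V
            rw [hyv']
            have : bb n.1 0 = aa n.1 := rfl
            rw [this]; exact haV
          · have hm0' : (0 : ℝ) < m := by exact_mod_cast hm0
            rw [Set.mem_preimage, toPlane_def, hm, Metric.mem_ball, dist_mk] at hy'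
            rw [sub_self, abs_zero, sub_zero, abs_of_nonneg (by positivity),
              max_eq_right (by positivity)] at hy'
            have hlt : (n.1 : ℝ) * ((M : ℝ) + 1) < (n.1 : ℝ) * m :=
              lt_of_one_div_lt_one_div (by positivity) hy'
            have hMm : M ≤ m := by
              have h4 : (M : ℝ) + 1 < m := by
                have := (mul_lt_mul_iff_right₀ hn0).mp hlt
                linarith
              have : (M : ℝ) < m := by linarith
              exact_mod_cast this.le
            show pr (some n) y' ∈ V
            rw [hyv']
            exact hM m hMm
      · -- y is an isolated point of Cₙ
        have hμ0' : (0 : ℝ) < μ := by exact_mod_cast hμ0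
        refine ⟨Metric.ball ((1 / (n.1 : ℝ), 1 / ((n.1 : ℝ) * (μ : ℝ))))
          ((1 / (n.1 : ℝ)) * (1 / ((μ : ℝ) * ((μ : ℝ) + 1)))), ?_, ?_⟩
        · have hcen : toPlane (some n) y = ((1 / (n.1 : ℝ), 1 / ((n.1 : ℝ) * (μ : ℝ)))) := by
            rw [toPlane_def, hμ]
          rw [hcen]
          exact Metric.ball_mem_nhds _ (by positivity)
        · intro y' hy'
          obtain ⟨m, hm⟩ := (mem_C_iff n.2).mp y'.2
          have hyv' : pr (some n) y' = bb n.1 m := ext_val (hm.trans (bb_val n.1 m).symm)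
          rcases eq_or_ne m μ with rfl | hmμ
          · show pr (some n) y' ∈ V
            rw [hyv', ← hyv]
            exact hy
          · exfalso
            rw [Set.mem_preimage, toPlane_def, hm, Metric.mem_ball, dist_mk] at hy'
            have key : (1 / (n.1 : ℝ)) * (1 / ((μ : ℝ) * ((μ : ℝ) + 1))) ≤
                |1 / ((n.1 : ℝ) * m) - 1 / ((n.1 : ℝ) * μ)| := by
              rw [← one_div_mul_one_div ((n.1 : ℝ)) ((m : ℝ)),
                ← one_div_mul_one_div ((n.1 : ℝ)) ((μ : ℝ)), ← mul_sub, abs_mul,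
                abs_of_nonneg (by positivity : (0:ℝ) ≤ 1 / (n.1 : ℝ))]
              exact mul_le_mul_of_nonneg_left (gap μ m hμ0 hmμ) (by positivity)
            linarith [le_max_right |1 / (n.1 : ℝ) - 1 / (n.1 : ℝ)|
              |1 / ((n.1 : ℝ) * m) - 1 / ((n.1 : ℝ) * μ)|]


lemma tendsto_aa : Tendsto aa atTop (𝓝 z0) :=
  tendsto_nhds.mpr fun _ hs hz => (isOpen_iff.mp hs).1 hz

lemma tendsto_bb {k : ℕ} (hk : 0 < k) : Tendsto (bb k) atTop (𝓝 (aa k)) :=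
  tendsto_nhds.mpr fun _ hs ha => (isOpen_iff.mp hs).2 k hk ha

section GMap

variable (nn MM : ℕ → ℕ)

lemma dec_exists (x : ArensS2) : ∃ p : ℕ × ℕ, x = bb p.1 p.2 := by
  rcases exists_rep x with rfl | ⟨k, _, rfl⟩ | ⟨k, m, _, _, rfl⟩
  · exact ⟨(0, 0), rfl⟩
  · exact ⟨(k, 0), rfl⟩
  · exact ⟨(k, m), rfl⟩

noncomputable def dec (x : ArensS2) : ℕ × ℕ := (dec_exists x).choose

lemma dec_spec (x : ArensS2) : x = bb (dec x).1 (dec x).2 := (dec_exists x).choose_spec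

/-- The reindexing self-map of the Arens space: the `k`-th branch is sent into the
`nn k`-th branch, shifted by `MM k`. -/
noncomputable def gMap (x : ArensS2) : ArensS2 :=
  if (dec x).1 = 0 then z0
  else if (dec x).2 = 0 then aa (nn (dec x).1)
  else bb (nn (dec x).1) ((dec x).2 + MM (dec x).1)

lemma gMap_z0 : gMap nn MM z0 = z0 := by
  have h1 : (dec z0).1 = 0 := by
    by_contra h
    exact bb_ne_z0 (Nat.pos_of_ne_zero h) (dec_spec z0).symm
  rw [gMap, if_pos h1]

lemma gMap_aa {k : ℕ} (hk : 0 < k) : gMap nn MM (aa k) = aa (nn k) := by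
  have h' : bb k 0 = bb (dec (aa k)).1 (dec (aa k)).2 := dec_spec (aa k)
  have h1 : k = (dec (aa k)).1 := bb_fst (h := h')
  rw [← h1] at h'
  have h2 : (0 : ℕ) = (dec (aa k)).2 := bb_snd hk h'
  rw [gMap, if_neg (by omega), if_pos h2.symm, ← h1]

lemma gMap_bb {k m : ℕ} (hk : 0 < k) (hm : 0 < m) :
    gMap nn MM (bb k m) = bb (nn k) (m + MM k) := by
  have h' : bb k m = bb (dec (bb k m)).1 (dec (bb k m)).2 := dec_spec (bb k m)
  have h1 : k = (dec (bb k m)).1 := bb_fst (h := h')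
  rw [← h1] at h'
  have h2 : m = (dec (bb k m)).2 := bb_snd hk h'
  rw [gMap, if_neg (by omega), if_neg (by omega), ← h1, ← h2]

variable {nn MM}
variable (hn1 : ∀ k, 0 < nn k) (hmono : StrictMono nn)

include hn1 hmono

lemma gMap_eq_z0 {x : ArensS2} (h : gMap nn MM x = z0) : x = z0 := by
  rcases exists_rep x with rfl | ⟨k, hk, rfl⟩ | ⟨k, m, hk, hm, rfl⟩
  · rfl
  · rw [gMap_aa nn MM hk] at h
    exact absurd h (aa_ne_z0 (hn1 k))
  · rw [gMap_bb nn MM hk hm] at h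
    exact absurd h (bb_ne_z0 (hn1 k))

lemma gMap_eq_aa {x : ArensS2} {l : ℕ} (hl : 0 < l) (h : gMap nn MM x = aa l) :
    ∃ k, 0 < k ∧ nn k = l ∧ x = aa k := by
  rcases exists_rep x with rfl | ⟨k, hk, rfl⟩ | ⟨k, m, hk, hm, rfl⟩
  · rw [gMap_z0] at h
    exact absurd h.symm (aa_ne_z0 hl)
  · rw [gMap_aa nn MM hk] at h
    exact ⟨k, hk, aa_inj h, rfl⟩
  · rw [gMap_bb nn MM hk hm] at h
    exact absurd h (bb_ne_aa (hn1 k) (by omega))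

lemma gMap_eq_bb {x : ArensS2} {l μ : ℕ} (hl : 0 < l) (hμ : 0 < μ)
    (h : gMap nn MM x = bb l μ) :
    ∃ k m, 0 < k ∧ 0 < m ∧ nn k = l ∧ m + MM k = μ ∧ x = bb k m := by
  rcases exists_rep x with rfl | ⟨k, hk, rfl⟩ | ⟨k, m, hk, hm, rfl⟩
  · rw [gMap_z0] at h
    exact absurd h.symm (bb_ne_z0 hl)
  · rw [gMap_aa nn MM hk] at h
    exact absurd h.symm (bb_ne_aa hl hμ)
  · rw [gMap_bb nn MM hk hm] at h
    have h1' : nn k = l := bb_fst (h := h)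
    rw [← h1'] at h
    have h2 : m + MM k = μ := bb_snd (hn1 k) h
    exact ⟨k, m, hk, hm, h1', h2, rfl⟩

lemma gMap_injective : Function.Injective (gMap nn MM) := by
  intro x y h
  rcases exists_rep y with rfl | ⟨k, hk, rfl⟩ | ⟨k, m, hk, hm, rfl⟩
  · rw [gMap_z0] at h
    exact gMap_eq_z0 hn1 hmono h
  · rw [gMap_aa nn MM hk] at h
    obtain ⟨k', hk', hnk', rfl⟩ := gMap_eq_aa hn1 hmono (hn1 k) h
    rw [hmono.injective hnk']
  · rw [gMap_bb nn MM hk hm] at h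
    obtain ⟨k', m', hk', hm', hnk', hmm', rfl⟩ :=
      gMap_eq_bb hn1 hmono (hn1 k) (by omega) h
    have : k' = k := hmono.injective hnk'
    subst this
    have : m' = m := by omega
    subst this
    rfl

lemma continuous_gMap : Continuous (gMap nn MM) := by
  rw [continuous_def]
  intro V hV
  rw [isOpen_iff] at hV ⊢
  obtain ⟨hA, hB⟩ := hV
  constructor
  · intro hz0
    rw [Set.mem_preimage, gMap_z0] at hz0
    obtain ⟨K, hK⟩ := eventually_atTop.mp (hA hz0)
    refine eventually_atTop.mpr ⟨K + 1, fun k hk => ?_⟩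
    rw [Set.mem_preimage, gMap_aa nn MM (by omega : 0 < k)]
    exact hK (nn k) (le_trans (by omega) hmono.le_apply)
  · intro k hk hak
    rw [Set.mem_preimage, gMap_aa nn MM hk] at hak
    obtain ⟨M, hM⟩ := eventually_atTop.mp (hB (nn k) (hn1 k) hak)
    refine eventually_atTop.mpr ⟨M + 1, fun m hm => ?_⟩
    rw [Set.mem_preimage, gMap_bb nn MM hk (by omega : 0 < m)]
    exact hM (m + MM k) (by omega)

lemma isOpen_gMap_target {V : Set ArensS2} (hV : IsOpen V) :
    IsOpen (gMap nn MM '' V ∪ (Set.range (gMap nn MM))ᶜ) := by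
  obtain ⟨hA, hB⟩ := isOpen_iff.mp hV
  rw [isOpen_iff]
  constructor
  · intro hz0
    have hz0im : z0 ∈ gMap nn MM '' V := by
      rcases hz0 with h | h
      · exact h
      · exact absurd ⟨z0, gMap_z0 nn MM⟩ h
    obtain ⟨x, hxV, hxz⟩ := hz0im
    have hxz0 : x = z0 := gMap_eq_z0 hn1 hmono hxz
    subst hxz0
    obtain ⟨K, hK⟩ := eventually_atTop.mp (hA hxV)
    refine eventually_atTop.mpr ⟨nn K + 1, fun l hl => ?_⟩
    by_cases hrange : aa l ∈ Set.range (gMap nn MM)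
    · obtain ⟨x, hx⟩ := hrange
      obtain ⟨k, hk, hnk, rfl⟩ := gMap_eq_aa hn1 hmono (by omega : 0 < l) hx
      have hkK : K ≤ k := by
        by_contra hcon
        have : nn k < nn K := hmono (by omega)
        omega
      exact Or.inl ⟨aa k, hK k hkK, by rw [gMap_aa nn MM hk, hnk]⟩
    · exact Or.inr hrange
  · intro l hl hal
    rcases hal with hal | hal
    · obtain ⟨x, hxV, hxa⟩ := hal
      obtain ⟨k, hk, hnk, rfl⟩ := gMap_eq_aa hn1 hmono hl hxa
      obtain ⟨M, hM⟩ := eventually_atTop.mp (hB k hk hxV)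
      refine eventually_atTop.mpr ⟨M + MM k + 1, fun μ hμ => ?_⟩
      by_cases hrange : bb l μ ∈ Set.range (gMap nn MM)
      · obtain ⟨x, hx⟩ := hrange
        obtain ⟨k', m', hk', hm', hnk', hmm', rfl⟩ :=
          gMap_eq_bb hn1 hmono hl (by omega : 0 < μ) hx
        have hkk : k' = k := hmono.injective (by rw [hnk', hnk])
        have hMMk : MM k' = MM k := by rw [hkk]
        refine Or.inl ⟨bb k m', hM m' (by omega), ?_⟩
        rw [gMap_bb nn MM hk (by omega : 0 < m'), hnk]
        rw [← hkk, hmm']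
      · exact Or.inr hrange
    · refine eventually_atTop.mpr ⟨1, fun μ hμ => ?_⟩
      by_cases hrange : bb l μ ∈ Set.range (gMap nn MM)
      · exfalso
        obtain ⟨x, hx⟩ := hrange
        obtain ⟨k, m, hk, hm, hnk, hmm, rfl⟩ :=
          gMap_eq_bb hn1 hmono hl (by omega : 0 < μ) hx
        exact hal ⟨aa k, by rw [gMap_aa nn MM hk, hnk]⟩
      · exact Or.inr hrange

lemma gMap_preimage_target (V : Set ArensS2) :
    gMap nn MM ⁻¹' (gMap nn MM '' V ∪ (Set.range (gMap nn MM))ᶜ) = V := by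
  ext x
  simp only [Set.mem_preimage, Set.mem_union, Set.mem_compl_iff]
  constructor
  · rintro (⟨v, hv, hvx⟩ | h)
    · rwa [← gMap_injective hn1 hmono hvx]
    · exact absurd ⟨x, rfl⟩ h
  · intro hx
    exact Or.inl ⟨x, hx, rfl⟩

lemma isEmbedding_gMap : Topology.IsEmbedding (gMap nn MM) := by
  refine ⟨⟨le_antisymm (continuous_iff_le_induced.mp (continuous_gMap hn1 hmono)) ?_⟩,
    gMap_injective hn1 hmono⟩
  refine isOpen_implies_isOpen_iff.mp fun V hV => ?_
  exact isOpen_induced_iff.mpr ⟨gMap nn MM '' V ∪ (Set.range (gMap nn MM))ᶜ,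
    isOpen_gMap_target hn1 hmono hV, gMap_preimage_target hn1 hmono V⟩

end GMap


lemma compact_isClosed {Z : Type*} [TopologicalSpace Z]
    (hGδ : ∀ z : Z, ∃ U : ℕ → Set Z,
      (∀ n, IsOpen (U n) ∧ z ∈ U n) ∧ ({z} : Set Z) = ⋂ n, closure (U n))
    {K : Set Z} (hK : IsCompact K) : IsClosed K := by
  classical
  refine isClosed_of_closure_subset fun w hw => ?_
  by_contra hwK
  choose Uz hUz1 hUz2 using hGδ
  set n : Z → ℕ := fun z => if h : ∃ n, w ∉ closure (Uz z n) then h.choose else 0 with hn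
  have hsel : ∀ z ∈ K, w ∉ closure (Uz z (n z)) := by
    intro z hz
    have hex : ∃ n, w ∉ closure (Uz z n) := by
      by_contra hcon
      push_neg at hcon
      have hmem : w ∈ ({z} : Set Z) := by
        rw [hUz2 z]
        exact Set.mem_iInter.mpr hcon
      rw [Set.mem_singleton_iff] at hmem
      subst hmem
      exact hwK hz
    simp only [hn, dif_pos hex]
    exact hex.choose_spec
  obtain ⟨t, htK, hcover⟩ := hK.elim_nhds_subcover (fun z => Uz z (n z))
    (fun z _ => (hUz1 z (n z)).1.mem_nhds (hUz1 z (n z)).2)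
  have hwnot : w ∉ closure (⋃ z ∈ t, Uz z (n z)) := by
    rw [t.closure_biUnion]
    simp only [Set.mem_iUnion, not_exists]
    exact fun z hz => hsel z (htK z hz)
  exact hwnot (closure_mono hcover hw)

end Arens

theorem stmt3 {Z : Type*} [TopologicalSpace Z]
    (hGδ : ∀ z : Z, ∃ U : ℕ → Set Z,
      (∀ n, IsOpen (U n) ∧ z ∈ U n) ∧ ({z} : Set Z) = ⋂ n, closure (U n))
    (hcopy : ∃ e : ArensS2 → Z, Topology.IsEmbedding e) :
    ∃ e : ArensS2 → Z, Topology.IsClosedEmbedding e := by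
  classical
  obtain ⟨e, he⟩ := hcopy
  obtain ⟨U, hU, hUz⟩ := hGδ (e Arens.z0)
  set U' : ℕ → Set Z := fun k => ⋂ j ∈ Finset.range (k + 1), U j with hU'
  have hU'open : ∀ k, IsOpen (U' k) := fun k =>
    isOpen_biInter_finset fun j _ => (hU j).1
  have hU'mem : ∀ k, e Arens.z0 ∈ U' k := fun k =>
    Set.mem_biInter fun j _ => (hU j).2
  have hU'anti : ∀ {k l : ℕ}, k ≤ l → U' l ⊆ U' k := by
    intro k l hkl x hx
    refine Set.mem_biInter fun j hj => ?_
    have hj2 : j < k + 1 := Finset.mem_range.mp hj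
    exact Set.mem_iInter₂.mp hx j (Finset.mem_range.mpr (by omega))
  have hsep : ∀ w, w ≠ e Arens.z0 → ∃ k, w ∉ closure (U' k) := by
    intro w hw
    by_contra hcon
    push_neg at hcon
    have h1 : ∀ k, w ∈ closure (U k) := fun k =>
      closure_mono
        (show U' k ⊆ U k from fun x hx =>
          Set.mem_iInter₂.mp hx k (by simp)) (hcon k)
    have h2 : w ∈ ({e Arens.z0} : Set Z) := by
      rw [hUz]
      exact Set.mem_iInter.mpr h1
    exact hw h2
  have htend : Filter.Tendsto (fun k => e (Arens.aa k)) Filter.atTop (nhds (e Arens.z0)) :=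
    (he.continuous.tendsto Arens.z0).comp Arens.tendsto_aa
  have hsel1 : ∀ k, ∃ N, ∀ j ≥ N, e (Arens.aa j) ∈ U' k := fun k =>
    Filter.eventually_atTop.mp (htend ((hU'open k).mem_nhds (hU'mem k)))
  choose N hN using hsel1
  set nn : ℕ → ℕ := fun k => Nat.rec (N 0 + 1) (fun k ih => max ih (N (k + 1)) + 1) k with hnn
  have hnn_succ : ∀ k, nn (k + 1) = max (nn k) (N (k + 1)) + 1 := fun k => rfl
  have hmono : StrictMono nn := strictMono_nat_of_lt_succ fun k => by
    rw [hnn_succ]; omega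
  have hnnN : ∀ k, N k ≤ nn k := by
    intro k
    cases k with
    | zero => show N 0 ≤ N 0 + 1; omega
    | succ k => rw [hnn_succ]; omega
  have hnn1 : ∀ k, 0 < nn k := by
    intro k
    induction k with
    | zero => show 0 < N 0 + 1; omega
    | succ k ih => rw [hnn_succ]; omega
  have haU : ∀ k, e (Arens.aa (nn k)) ∈ U' k := fun k => hN k (nn k) (hnnN k)
  have hsel2 : ∀ k, ∃ M, ∀ m ≥ M, e (Arens.bb (nn k) m) ∈ U' k := by
    intro k
    have htb : Filter.Tendsto (fun m => e (Arens.bb (nn k) m)) Filter.atTop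
        (nhds (e (Arens.aa (nn k)))) :=
      (he.continuous.tendsto _).comp (Arens.tendsto_bb (hnn1 k))
    exact Filter.eventually_atTop.mp (htb ((hU'open k).mem_nhds (haU k)))
  choose MM hMM using hsel2
  refine ⟨e ∘ Arens.gMap nn MM,
    Topology.IsClosedEmbedding.mk (he.comp (Arens.isEmbedding_gMap hnn1 hmono)) ?_⟩
  have hrange : Set.range (e ∘ Arens.gMap nn MM) = e '' Set.range (Arens.gMap nn MM) :=
    Set.range_comp e _
  rw [hrange]
  set B : ℕ → Set Z := fun k => insert (e (Arens.aa (nn (k + 1))))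
    (Set.range fun m : ℕ => e (Arens.bb (nn (k + 1)) (m + MM (k + 1) + 1))) with hB
  have hSeq : e '' Set.range (Arens.gMap nn MM) = insert (e Arens.z0) (⋃ k, B k) := by
    apply Set.Subset.antisymm
    · rintro _ ⟨_, ⟨x, rfl⟩, rfl⟩
      rcases Arens.exists_rep x with rfl | ⟨k, hk, rfl⟩ | ⟨k, m, hk, hm, rfl⟩
      · rw [Arens.gMap_z0]
        exact Set.mem_insert _ _
      · refine Set.mem_insert_of_mem _ (Set.mem_iUnion.mpr ⟨k - 1, ?_⟩)
        simp only [hB]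
        have hk' : k - 1 + 1 = k := by omega
        rw [Arens.gMap_aa nn MM hk, hk']
        exact Set.mem_insert _ _
      · refine Set.mem_insert_of_mem _ (Set.mem_iUnion.mpr ⟨k - 1, ?_⟩)
        simp only [hB]
        have hk' : k - 1 + 1 = k := by omega
        rw [Arens.gMap_bb nn MM hk hm, hk']
        refine Set.mem_insert_of_mem _ ⟨m - 1, ?_⟩
        have hm' : m - 1 + MM k + 1 = m + MM k := by omega
        show e (Arens.bb (nn k) (m - 1 + MM k + 1)) = e (Arens.bb (nn k) (m + MM k))
        rw [hm']
    · intro x hx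
      rcases Set.mem_insert_iff.mp hx with rfl | hx
      · exact ⟨Arens.gMap nn MM Arens.z0, ⟨Arens.z0, rfl⟩, by rw [Arens.gMap_z0]⟩
      · obtain ⟨k, hk⟩ := Set.mem_iUnion.mp hx
        simp only [hB] at hk
        rcases Set.mem_insert_iff.mp hk with rfl | ⟨m, rfl⟩
        · exact ⟨Arens.gMap nn MM (Arens.aa (k + 1)), ⟨Arens.aa (k + 1), rfl⟩,
            by rw [Arens.gMap_aa nn MM (by omega : 0 < k + 1)]⟩
        · refine ⟨Arens.gMap nn MM (Arens.bb (k + 1) (m + 1)),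
            ⟨Arens.bb (k + 1) (m + 1), rfl⟩, ?_⟩
          rw [Arens.gMap_bb nn MM (by omega : 0 < k + 1) (by omega : 0 < m + 1)]
          have hmm : m + 1 + MM (k + 1) = m + MM (k + 1) + 1 := by omega
          rw [hmm]
  rw [hSeq]
  refine isClosed_of_closure_subset fun w hw => ?_
  by_cases hwz : w = e Arens.z0
  · exact hwz ▸ Set.mem_insert _ _
  obtain ⟨k₀, hk₀⟩ := hsep w hwz
  set F : Set Z := insert (e Arens.z0) (⋃ k ∈ Finset.range k₀, B k) with hF
  set T : Set Z := ⋃ k ∈ {k : ℕ | k₀ ≤ k}, B k with hT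
  have hsplit : insert (e Arens.z0) (⋃ k, B k) ⊆ F ∪ T := by
    intro x hx
    rcases Set.mem_insert_iff.mp hx with rfl | hx
    · exact Or.inl (Set.mem_insert _ _)
    · obtain ⟨k, hk⟩ := Set.mem_iUnion.mp hx
      rcases lt_or_ge k k₀ with hlt | hle
      · exact Or.inl (Set.mem_insert_of_mem _
          (Set.mem_biUnion (Finset.mem_range.mpr hlt) hk))
      · exact Or.inr (Set.mem_biUnion hle hk)
  have hBU : ∀ k, B k ⊆ U' (k + 1) := by
    intro k
    simp only [hB]
    rintro y (rfl | ⟨m, rfl⟩)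
    · exact haU (k + 1)
    · exact hMM (k + 1) _ (by omega)
  have hTsub : T ⊆ U' k₀ := by
    intro x hx
    obtain ⟨k, hk, hxB⟩ := Set.mem_iUnion₂.mp hx
    exact hU'anti (by exact Nat.le_succ_of_le hk) (hBU k hxB)
  have hwT : w ∉ closure T := fun hmem => hk₀ (closure_mono hTsub hmem)
  have hBcomp : ∀ k, IsCompact (B k) := by
    intro k
    have h1 : Filter.Tendsto (fun m : ℕ => m + (MM (k + 1) + 1)) Filter.atTop Filter.atTop :=
      Filter.tendsto_add_atTop_nat _
    have h2 := (Arens.tendsto_bb (hnn1 (k + 1))).comp h1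
    have h3 := (he.continuous.tendsto _).comp h2
    have h4 : Filter.Tendsto (fun m => e (Arens.bb (nn (k + 1)) (m + MM (k + 1) + 1)))
        Filter.atTop (nhds (e (Arens.aa (nn (k + 1))))) := by
      simpa [Function.comp_def, add_assoc] using h3
    simpa only [hB] using h4.isCompact_insert_range
  have hFcomp : IsCompact F := by
    refine IsCompact.insert ?_ _
    exact Set.Finite.isCompact_biUnion (Finset.range k₀).finite_toSet fun k _ => hBcomp k
  have hFclosed : IsClosed F := Arens.compact_isClosed hGδ hFcomp
  have hwFT : w ∈ closure F ∪ closure T := by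
    rw [← closure_union]
    exact closure_mono hsplit hw
  rcases hwFT with hwF | hwT'
  · have hwF' : w ∈ F := hFclosed.closure_subset hwF
    rcases Set.mem_insert_iff.mp hwF' with rfl | hwF''
    · exact Set.mem_insert _ _
    · obtain ⟨k, _, hk⟩ := Set.mem_iUnion₂.mp hwF''
      exact Set.mem_insert_of_mem _ (Set.mem_iUnion.mpr ⟨k, hk⟩)
  · exact absurd hwT' hwT
end

section
/- If Y is a closed subspace of a metrizable space X, then there is a linear extender e : C(Y) → C(X) (assigning to each continuous real-valued function on Y a continuous extension to X) which is a topological embedding when both spaces carry the compact-open topology. -/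
open Set Metric Topology Filter Function TopologicalSpace

/-- **Dugundji's extension theorem** (metric space version, nonempty closed subset):
there is a linear extender `C(Y, ℝ) →ₗ[ℝ] C(X, ℝ)` which is an embedding for the
compact-open topologies. -/
theorem dugundji_aux {X : Type*} [MetricSpace X] (Y : Set X) (hY : IsClosed Y)
    (hne : Y.Nonempty) :
    ∃ e : C(Y, ℝ) →ₗ[ℝ] C(X, ℝ),
      (∀ (f : C(Y, ℝ)) (y : Y), e f y = f y) ∧
      Topology.IsEmbedding (fun f : C(Y, ℝ) => e f) := by
  classical
  have hdpos : ∀ c : ↥(Yᶜ), 0 < infDist (c : X) Y := fun c =>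
    (hY.notMem_iff_infDist_pos hne).mp c.2
  set B : ↥(Yᶜ) → Set ↥(Yᶜ) := fun c =>
    Subtype.val ⁻¹' Metric.ball (c : X) (infDist (c : X) Y / 2) with hBdef
  have hBopen : ∀ c, IsOpen (B c) := fun c =>
    Metric.isOpen_ball.preimage continuous_subtype_val
  have hBcover : (univ : Set ↥(Yᶜ)) ⊆ ⋃ c, B c := by
    intro c _
    refine mem_iUnion.mpr ⟨c, ?_⟩
    simp only [hBdef, mem_preimage, Metric.mem_ball, dist_self]
    exact half_pos (hdpos c)
  obtain ⟨φ, hφ⟩ := PartitionOfUnity.exists_isSubordinate isClosed_univ B hBopen hBcover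
  have hpex : ∀ c : ↥(Yᶜ), ∃ q ∈ Y, dist (c : X) q < 2 * infDist (c : X) Y := fun c =>
    (infDist_lt_iff hne).mp (by linarith [hdpos c])
  choose p hpY hpd using hpex
  -- the key metric estimate for the chosen points
  have key : ∀ (c z : ↥(Yᶜ)), z ∈ tsupport (φ c) →
      dist (z : X) (p c) ≤ 5 * infDist (z : X) Y := by
    intro c z hz
    have h1 : dist (z : X) (c : X) < infDist (c : X) Y / 2 := by
      have := hφ c hz
      simp [hBdef, Metric.mem_ball] at this
      exact this
    have h2 : infDist (c : X) Y ≤ infDist (z : X) Y + dist (c : X) (z : X) :=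
      infDist_le_infDist_add_dist
    have h3 : dist (c : X) (z : X) = dist (z : X) (c : X) := dist_comm _ _
    have h4 : dist (z : X) (p c) ≤ dist (z : X) (c : X) + dist (c : X) (p c) :=
      dist_triangle _ _ _
    have h5 := hpd c
    linarith
  have hmem : ∀ {x : X}, x ∉ Y → x ∈ (Yᶜ : Set X) := fun hx => hx
  -- the extension operator
  set E : C(Y, ℝ) → X → ℝ := fun f x =>
    if hx : x ∈ Y then f ⟨x, hx⟩
    else ∑ᶠ c : ↥(Yᶜ), φ c ⟨x, hmem hx⟩ * f ⟨p c, hpY c⟩ with hEdef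
  have hEY : ∀ f (x : X) (hx : x ∈ Y), E f x = f ⟨x, hx⟩ := fun f x hx => dif_pos hx
  have hEU : ∀ f (x : X) (hx : x ∉ Y),
      E f x = ∑ᶠ c, φ c ⟨x, hmem hx⟩ * f ⟨p c, hpY c⟩ := fun f x hx => dif_neg hx
  -- the finite sums involved
  have hsum_eq : ∀ (z : ↥(Yᶜ)) (g : ↥(Yᶜ) → ℝ),
      ∑ᶠ c, φ c z * g c = ∑ c ∈ φ.finsupport z, φ c z * g c := by
    intro z g
    apply finsum_eq_sum_of_support_subset
    intro c hc
    rw [Finset.mem_coe, PartitionOfUnity.mem_finsupport]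
    exact Function.mem_support.mpr fun h => hc (by simp [Function.mem_support, h] at hc ⊢)
  have habs : ∀ (z : ↥(Yᶜ)) (g : ↥(Yᶜ) → ℝ) (M : ℝ),
      (∀ c, φ c z ≠ 0 → |g c| ≤ M) → |∑ᶠ c, φ c z * g c| ≤ M := by
    intro z g M hM
    rw [hsum_eq]
    calc |∑ c ∈ φ.finsupport z, φ c z * g c| ≤ ∑ c ∈ φ.finsupport z, |φ c z * g c| :=
          Finset.abs_sum_le_sum_abs _ _
      _ ≤ ∑ c ∈ φ.finsupport z, φ c z * M := by
          refine Finset.sum_le_sum fun c hc => ?_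
          rw [abs_mul, abs_of_nonneg (φ.nonneg c z)]
          exact mul_le_mul_of_nonneg_left
            (hM c (Function.mem_support.mp ((φ.mem_finsupport z).mp hc))) (φ.nonneg c z)
      _ = M := by rw [← Finset.sum_mul, φ.sum_finsupport (mem_univ z), one_mul]
  have hdiff : ∀ (g : ↥(Yᶜ) → ℝ) (z : ↥(Yᶜ)) (b : ℝ),
      (∑ᶠ c, φ c z * g c) - b = ∑ᶠ c, φ c z * (g c - b) := by
    intro g z b
    rw [hsum_eq, hsum_eq]
    simp only [mul_sub]
    rw [Finset.sum_sub_distrib, ← Finset.sum_mul, φ.sum_finsupport (mem_univ z), one_mul]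
  -- continuity of the extension
  have hcontU : ∀ f : C(Y, ℝ),
      Continuous fun z : ↥(Yᶜ) => ∑ᶠ c, φ c z * f ⟨p c, hpY c⟩ := by
    intro f
    have := φ.continuous_finsum_smul (E := ℝ) (g := fun c (_ : ↥(Yᶜ)) => f ⟨p c, hpY c⟩)
      (fun c x _ => continuousAt_const)
    simpa [smul_eq_mul] using this
  have hcontE : ∀ f, Continuous (E f) := by
    intro f
    rw [continuous_iff_continuousAt]
    intro x
    by_cases hx : x ∈ Y
    · rw [Metric.continuousAt_iff]
      intro ε hε
      obtain ⟨δ₁, hδ₁pos, hδ₁⟩ := Metric.continuousAt_iff.mp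
        ((map_continuous f).continuousAt (x := ⟨x, hx⟩)) (ε / 2) (by linarith)
      refine ⟨δ₁ / 6, by positivity, ?_⟩
      intro z hz
      rw [hEY f x hx]
      by_cases hzY : z ∈ Y
      · rw [hEY f z hzY]
        have hd : dist (⟨z, hzY⟩ : Y) (⟨x, hx⟩ : Y) < δ₁ := by
          rw [Subtype.dist_eq]
          calc dist z x < δ₁ / 6 := hz
            _ ≤ δ₁ := by linarith
        calc dist (f ⟨z, hzY⟩) (f ⟨x, hx⟩) < ε / 2 := hδ₁ hd
          _ < ε := by linarith
      · rw [hEU f z hzY, Real.dist_eq, hdiff]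
        have hb : |∑ᶠ c, φ c ⟨z, hmem hzY⟩ * (f ⟨p c, hpY c⟩ - f ⟨x, hx⟩)| ≤ ε / 2 := by
          apply habs
          intro c hc
          have hts : (⟨z, hmem hzY⟩ : ↥(Yᶜ)) ∈ tsupport (φ c) :=
            subset_closure (Function.mem_support.mpr hc)
          have h1 := key c _ hts
          have h2 : infDist z Y ≤ dist z x := infDist_le_dist_of_mem hx
          have hd : dist (⟨p c, hpY c⟩ : Y) (⟨x, hx⟩ : Y) < δ₁ := by
            rw [Subtype.dist_eq]
            calc dist (p c) x ≤ dist (p c) z + dist z x := dist_triangle _ _ _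
              _ = dist z (p c) + dist z x := by rw [dist_comm]
              _ ≤ 5 * infDist z Y + dist z x := by linarith [h1]
              _ ≤ 6 * dist z x := by linarith
              _ < 6 * (δ₁ / 6) := by
                  have h6 : (0:ℝ) < 6 := by norm_num
                  exact (mul_lt_mul_iff_right₀ h6).mpr hz
              _ = δ₁ := by ring
          have := hδ₁ hd
          rw [Real.dist_eq] at this
          exact le_of_lt (lt_of_lt_of_le this (by linarith))
        calc |(∑ᶠ c, φ c ⟨z, hmem hzY⟩ * (f ⟨p c, hpY c⟩ - f ⟨x, hx⟩))| ≤ ε / 2 := hb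
          _ < ε := by linarith
    · have hcO : ContinuousOn (E f) (Yᶜ) := by
        rw [continuousOn_iff_continuous_restrict]
        have hres : (Yᶜ : Set X).restrict (E f) =
            fun z : ↥(Yᶜ) => ∑ᶠ c, φ c z * f ⟨p c, hpY c⟩ := by
          funext z
          exact hEU f z z.2
        change Continuous ((Yᶜ : Set X).restrict (E f))
        rw [hres]
        exact hcontU f
      exact hcO.continuousAt (hY.isOpen_compl.mem_nhds hx)
  -- the main compactness estimate
  have main : ∀ K : Set X, IsCompact K →
      ∃ K0 : Set X, K0 ⊆ Y ∧ IsCompact K0 ∧ (K ∩ Y ⊆ K0) ∧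
      (∀ c : ↥(Yᶜ), ((Subtype.val '' tsupport (φ c)) ∩ K).Nonempty → p c ∈ K0) := by
    intro K hK
    set A : Set ↥(Yᶜ) := {c | ((Subtype.val '' tsupport (φ c)) ∩ K).Nonempty} with hAdef
    set S : Set X := p '' A with hSdef
    have hSY : S ⊆ Y := by rintro _ ⟨c, _, rfl⟩; exact hpY c
    have hclosSY : closure S ⊆ Y := hY.closure_subset_iff.mpr hSY
    refine ⟨(K ∩ Y) ∪ closure S, union_subset inter_subset_right hclosSY, ?_,
      subset_union_left, fun c hc => Or.inr (subset_closure ⟨c, hc, rfl⟩)⟩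
    rw [isCompact_iff_isSeqCompact]
    intro u hu
    by_cases hin : {n | u n ∈ K ∩ Y}.Infinite
    · obtain ⟨σ, hσ, hσP⟩ := Filter.extraction_of_frequently_atTop
        (Nat.frequently_atTop_iff_infinite.mpr hin)
      obtain ⟨a, ha, ρ, hρ, hconv⟩ := (hK.inter_right hY).isSeqCompact
        (x := fun k => u (σ k)) hσP
      exact ⟨a, Or.inl ha, σ ∘ ρ, hσ.comp hρ, by simpa [Function.comp_def] using hconv⟩
    · rw [Set.not_infinite] at hin
      obtain ⟨N, hN⟩ : ∃ N, ∀ n ≥ N, u n ∈ closure S := by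
        rcases hin.bddAbove with ⟨m, hm⟩
        refine ⟨m + 1, fun n hn => ?_⟩
        rcases hu n with h | h
        · have := hm (show n ∈ {n | u n ∈ K ∩ Y} from h)
          omega
        · exact h
      set v : ℕ → X := fun n => u (n + N) with hvdef
      have hv : ∀ n, v n ∈ closure S := fun n => hN _ (Nat.le_add_left _ _)
      have hchoose : ∀ n : ℕ, ∃ c : ↥(Yᶜ), c ∈ A ∧ dist (v n) (p c) < 1 / (n + 1) := by
        intro n
        obtain ⟨q, hqS, hqd⟩ := Metric.mem_closure_iff.mp (hv n) (1 / (n + 1)) (by positivity)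
        obtain ⟨c, hcA, rfl⟩ := hqS
        exact ⟨c, hcA, hqd⟩
      choose c hcA hcd using hchoose
      have hx : ∀ n, ∃ ξ : ↥(Yᶜ), ξ ∈ tsupport (φ (c n)) ∧ (ξ : X) ∈ K := by
        intro n
        obtain ⟨x, ⟨ξ, hξ, rfl⟩, hxK⟩ := hcA n
        exact ⟨ξ, hξ, hxK⟩
      choose ξ hξsupp hξK using hx
      obtain ⟨a, haK, ρ, hρ, hρconv⟩ := hK.isSeqCompact (x := fun n => (ξ n : X)) hξK
      have hda : Tendsto (fun k => dist ((ξ (ρ k)) : X) a) atTop (𝓝 0) :=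
        tendsto_iff_dist_tendsto_zero.mp hρconv
      have hone : Tendsto (fun k => 1 / ((ρ k : ℝ) + 1)) atTop (𝓝 0) :=
        tendsto_one_div_add_atTop_nhds_zero_nat.comp hρ.tendsto_atTop
      by_cases haY : a ∈ Y
      · have hbound : ∀ k, dist (p (c (ρ k))) a ≤ 6 * dist ((ξ (ρ k)) : X) a := by
          intro k
          have h1 := key (c (ρ k)) (ξ (ρ k)) (hξsupp (ρ k))
          have h2 : infDist ((ξ (ρ k)) : X) Y ≤ dist ((ξ (ρ k)) : X) a :=
            infDist_le_dist_of_mem haY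
          have h3 := dist_triangle (p (c (ρ k))) ((ξ (ρ k)) : X) a
          have h4 : dist (p (c (ρ k))) ((ξ (ρ k)) : X) = dist ((ξ (ρ k)) : X) (p (c (ρ k))) :=
            dist_comm _ _
          linarith
        have hpconv : Tendsto (fun k => p (c (ρ k))) atTop (𝓝 a) := by
          apply tendsto_iff_dist_tendsto_zero.mpr
          apply squeeze_zero (fun k => dist_nonneg) hbound
          simpa using hda.const_mul 6
        have haS : a ∈ closure S :=
          mem_closure_of_tendsto hpconv (Eventually.of_forall fun k => ⟨c (ρ k), hcA _, rfl⟩)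
        have hvconv : Tendsto (fun k => v (ρ k)) atTop (𝓝 a) := by
          apply tendsto_iff_dist_tendsto_zero.mpr
          have hb2 : ∀ k, dist (v (ρ k)) a ≤ 1 / (ρ k + 1) + 6 * dist ((ξ (ρ k)) : X) a := by
            intro k
            have ha1 := (hcd (ρ k)).le
            have ha2 := hbound k
            have ha3 := dist_triangle (v (ρ k)) (p (c (ρ k))) a
            linarith
          apply squeeze_zero (fun k => dist_nonneg) hb2
          simpa using hone.add (hda.const_mul 6)
        refine ⟨a, Or.inr haS, fun k => ρ k + N, fun i j hij => Nat.add_lt_add_right (hρ hij) N, ?_⟩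
        simpa [Function.comp_def] using hvconv
      · obtain ⟨V, hV, hVfin⟩ := φ.locallyFinite_tsupport (⟨a, haY⟩ : ↥(Yᶜ))
        have hξconv' : Tendsto (fun k => ξ (ρ k)) atTop (𝓝 (⟨a, haY⟩ : ↥(Yᶜ))) := by
          rw [tendsto_subtype_rng]
          exact hρconv
        have hev : ∀ᶠ k in atTop, ξ (ρ k) ∈ V := hξconv'.eventually_mem hV
        have hevF : ∀ᶠ k in atTop, c (ρ k) ∈ {i | (tsupport (φ i) ∩ V).Nonempty} :=
          hev.mono fun k hk => ⟨ξ (ρ k), hξsupp (ρ k), hk⟩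
        obtain ⟨c₀, hc₀⟩ : ∃ c₀, {k | c (ρ k) = c₀}.Infinite := by
          by_contra hcon
          push_neg at hcon
          have hfin : {k | c (ρ k) ∈ {i | (tsupport (φ i) ∩ V).Nonempty}}.Finite := by
            have hsub : {k | c (ρ k) ∈ {i | (tsupport (φ i) ∩ V).Nonempty}} ⊆
                ⋃ i ∈ {i | (tsupport (φ i) ∩ V).Nonempty}, {k | c (ρ k) = i} := by
              intro k hk
              exact mem_biUnion hk rfl
            exact (hVfin.biUnion fun i _ => hcon i).subset hsub
          exact (Nat.frequently_atTop_iff_infinite.mp hevF.frequently) hfin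
        obtain ⟨σ, hσ, hσP⟩ := Filter.extraction_of_frequently_atTop
          (Nat.frequently_atTop_iff_infinite.mpr hc₀)
        have hc₀A : c₀ ∈ A := by rw [← hσP 0]; exact hcA _
        have hconv : Tendsto (fun j => v (ρ (σ j))) atTop (𝓝 (p c₀)) := by
          apply tendsto_iff_dist_tendsto_zero.mpr
          apply squeeze_zero (f := fun j => dist (v (ρ (σ j))) (p c₀))
            (g := fun j => 1 / (ρ (σ j) + 1)) (fun j => dist_nonneg)
          · intro j
            have := (hcd (ρ (σ j))).le
            rwa [hσP j] at this
          · exact tendsto_one_div_add_atTop_nhds_zero_nat.comp (hρ.comp hσ).tendsto_atTop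
        refine ⟨p c₀, Or.inr (subset_closure ⟨c₀, hc₀A, rfl⟩), fun j => ρ (σ j) + N,
          fun i j hij => Nat.add_lt_add_right (hρ (hσ hij)) N, ?_⟩
        simpa [Function.comp_def] using hconv
  -- assembling the linear extender
  set eL : C(Y, ℝ) →ₗ[ℝ] C(X, ℝ) :=
    { toFun := fun f => ⟨E f, hcontE f⟩
      map_add' := by
        intro f g
        ext x
        by_cases hx : x ∈ Y
        · simp [hEY _ x hx, hEY f x hx, hEY g x hx]
        · simp only [ContinuousMap.coe_mk, ContinuousMap.add_apply, hEU _ x hx,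
            hEU f x hx, hEU g x hx, hsum_eq]
          rw [← Finset.sum_add_distrib]
          congr 1
          funext cc
          simp [mul_add]
      map_smul' := by
        intro r f
        ext x
        by_cases hx : x ∈ Y
        · simp [hEY _ x hx, hEY f x hx]
        · simp only [ContinuousMap.coe_mk, ContinuousMap.smul_apply, RingHom.id_apply,
            hEU _ x hx, hEU f x hx, hsum_eq]
          rw [smul_eq_mul, Finset.mul_sum]
          refine Finset.sum_congr rfl fun cc _ => ?_
          rw [smul_eq_mul]
          ring } with heL
  have heLapp : ∀ f x, eL f x = E f x := fun f x => rfl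
  have hrest : ∀ f : C(Y, ℝ), (eL f).restrict Y = f := by
    intro f
    ext y
    simp only [ContinuousMap.restrict_apply, heLapp, hEY f _ y.2]
  refine ⟨eL, ?_, ?_⟩
  · intro f y
    rw [heLapp, hEY f _ y.2]
  · have hcont : Continuous (fun f : C(Y, ℝ) => eL f) := by
      apply continuous_of_continuousAt_zero eL
      rw [ContinuousAt, map_zero, ContinuousMap.tendsto_iff_forall_isCompact_tendstoUniformlyOn]
      intro K hK
      rw [Metric.tendstoUniformlyOn_iff]
      intro ε hε
      obtain ⟨K0, hK0Y, hK0cpt, hKY0, hpK0⟩ := main K hK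
      set K' : Set Y := Subtype.val ⁻¹' K0 with hK'def
      have hK'cpt : IsCompact K' := by
        rw [Topology.IsEmbedding.subtypeVal.isCompact_iff]
        have himg : Subtype.val '' K' = K0 := by
          rw [hK'def, Subtype.image_preimage_coe, inter_eq_self_of_subset_right hK0Y]
        rwa [himg]
      have hid : TendstoUniformlyOn (fun (f : C(Y, ℝ)) (y : Y) => f y)
          ((0 : C(Y, ℝ)) : Y → ℝ) (𝓝 0) K' :=
        ContinuousMap.tendsto_iff_forall_isCompact_tendstoUniformlyOn.mp tendsto_id K' hK'cpt
      have hev := Metric.tendstoUniformlyOn_iff.mp hid (ε / 2) (by linarith)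
      filter_upwards [hev] with f hf x hx
      have hb : ∀ q : Y, (q : X) ∈ K0 → |f q| ≤ ε / 2 := by
        intro q hq
        have := hf q hq
        rw [ContinuousMap.zero_apply, dist_zero_left, Real.norm_eq_abs] at this
        exact this.le
      have hbx : |E f x| ≤ ε / 2 := by
        by_cases hxY : x ∈ Y
        · rw [hEY f x hxY]
          exact hb ⟨x, hxY⟩ (hKY0 ⟨hx, hxY⟩)
        · rw [hEU f x hxY]
          apply habs
          intro cc hcc
          have hccA : ((Subtype.val '' tsupport (φ cc)) ∩ K).Nonempty :=
            ⟨x, ⟨⟨x, hmem hxY⟩, subset_closure (Function.mem_support.mpr hcc), rfl⟩, hx⟩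
          exact hb ⟨p cc, hpY cc⟩ (hpK0 cc hccA)
      rw [ContinuousMap.zero_apply, dist_zero_left, heLapp, Real.norm_eq_abs]
      linarith
    refine Topology.IsEmbedding.of_comp hcont (ContinuousMap.continuous_restrict Y) ?_
    have hcompid : ((fun g : C(X, ℝ) => g.restrict Y) ∘ fun f : C(Y, ℝ) => eL f) = id := by
      funext f
      exact hrest f
    rw [hcompid]
    exact Topology.IsEmbedding.id

theorem stmt6 {X : Type*} [TopologicalSpace X] [TopologicalSpace.MetrizableSpace X]
    (Y : Set X) (hY : IsClosed Y) :
    ∃ e : C(Y, ℝ) →ₗ[ℝ] C(X, ℝ),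
      (∀ (f : C(Y, ℝ)) (y : Y), e f y = f y) ∧
      Topology.IsEmbedding (fun f : C(Y, ℝ) => e f) := by
  letI : MetricSpace X := TopologicalSpace.metrizableSpaceMetric X
  rcases Y.eq_empty_or_nonempty with rfl | hne
  · refine ⟨0, ?_, ?_⟩
    · rintro f ⟨y, hy⟩
      exact absurd hy (Set.notMem_empty y)
    · have hempty : IsEmpty (↥(∅ : Set X)) := ⟨fun x => x.2⟩
      have hsub : Subsingleton C((∅ : Set X), ℝ) :=
        ⟨fun f g => ContinuousMap.ext fun y => (hempty.false y).elim⟩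
      exact Topology.IsEmbedding.of_subsingleton _
  · exact dugundji_aux Y hY hne
end
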